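/- No infinite graph has a finite dynamic monopoly: if G is an infinite graph and W_0 ⊆ V is finite, then there is no round r at which all vertices of G are white. -/

import Mathlib

open Cardinal

/-- Synchronous majority update by cardinality on a possibly infinite graph:
a vertex is white next round iff its white neighbors strictly outnumber (in
cardinality) its black neighbors, or the two cardinalities are equal and the
vertex was white. -/
def cardUpd {V : Type*} (G : SimpleGraph V) (W : Set V) : Set V :=
  {v | #↥(G.neighborSet v \ W) < #↥(G.neighborSet v ∩ W) ∨
       (#↥(G.neighborSet v ∩ W) = #↥(G.neighborSet v \ W) ∧ v ∈ W)}

section Aux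

variable {V : Type*} {G : SimpleGraph V}

/-- Lemma A: a white vertex (after an update) has at least as many white
neighbors (w.r.t. the previous round) as black neighbors. -/
private lemma cardUpd_lemA {W : Set V} {v : V} (h : v ∈ cardUpd G W) :
    #↥(G.neighborSet v \ W) ≤ #↥(G.neighborSet v ∩ W) := by
  rcases h with h | ⟨h, _⟩
  · exact h.le
  · exact h.ge

/-- Strictness: a newly white vertex had strictly more white neighbors. -/
private lemma cardUpd_strict {W : Set V} {v : V} (h : v ∈ cardUpd G W) (hv : v ∉ W) :
    #↥(G.neighborSet v \ W) < #↥(G.neighborSet v ∩ W) := by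
  rcases h with h | ⟨_, hw⟩
  · exact h
  · exact absurd hw hv

/-- If the previous white set is finite, every white vertex has a finite
neighborhood. -/
private lemma cardUpd_finite_nbhd {W : Set V} {v : V} (hW : W.Finite)
    (h : v ∈ cardUpd G W) : (G.neighborSet v).Finite := by
  have h1 : (G.neighborSet v ∩ W).Finite := hW.inter_of_right _
  have h2 : (G.neighborSet v \ W).Finite := by
    rw [← Cardinal.lt_aleph0_iff_set_finite] at h1 ⊢
    exact lt_of_le_of_lt (cardUpd_lemA h) h1
  have h3 := h1.union h2
  rwa [Set.inter_union_diff] at h3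

/-- Lemma C: a vertex that is black, then white twice in a row, has a neighbor
that was white twice in a row (at the two earlier rounds). -/
private lemma cardUpd_lemC {W : Set V} {v : V} (hv0 : v ∉ W) (hv1 : v ∈ cardUpd G W)
    (hv2 : v ∈ cardUpd G (cardUpd G W)) :
    ∃ u, v ∈ G.neighborSet u ∧ u ∈ W ∧ u ∈ cardUpd G W := by
  by_contra hcon
  push_neg at hcon
  set X := G.neighborSet v with hX
  have hmem : ∀ u ∈ X, v ∈ G.neighborSet u := by
    intro u hu
    exact (G.mem_neighborSet u v).2 (((G.mem_neighborSet v u).1 hu).symm)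
  have sub1 : X ∩ W ⊆ X \ cardUpd G W := by
    intro u hu
    exact ⟨hu.1, fun hUW => hcon u (hmem u hu.1) hu.2 hUW⟩
  have sub2 : X ∩ cardUpd G W ⊆ X \ W := by
    intro u hu
    exact ⟨hu.1, fun hW => hcon u (hmem u hu.1) hW hu.2⟩
  have c1 : #↥(X ∩ W) ≤ #↥(X \ cardUpd G W) := Cardinal.mk_le_mk_of_subset sub1
  have c2 : #↥(X \ cardUpd G W) ≤ #↥(X ∩ cardUpd G W) := cardUpd_lemA hv2
  have c3 : #↥(X ∩ cardUpd G W) ≤ #↥(X \ W) := Cardinal.mk_le_mk_of_subset sub2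
  have c4 : #↥(X \ W) < #↥(X ∩ W) := cardUpd_strict hv1 hv0
  exact absurd ((c1.trans (c2.trans c3)).trans_lt c4) (lt_irrefl _)

/-- Lemma D: if the set of vertices white at both of two consecutive rounds is
finite and consists of finite-degree vertices, then any vertex white at the next
two consecutive rounds has finite degree. -/
private lemma cardUpd_lemD {W : Set V} {v : V}
    (hQ : (W ∩ cardUpd G W).Finite)
    (hdeg : ∀ u ∈ W ∩ cardUpd G W, (G.neighborSet u).Finite)
    (hv1 : v ∈ cardUpd G W) (hv2 : v ∈ cardUpd G (cardUpd G W)) :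
    (G.neighborSet v).Finite := by
  by_contra hXinf
  set X := G.neighborSet v with hX
  have hv0 : v ∉ W := fun hvW => hXinf (hdeg v ⟨hvW, hv1⟩)
  have hstrict : #↥(X \ W) < #↥(X ∩ W) := cardUpd_strict hv1 hv0
  have hArel : #↥(X \ cardUpd G W) ≤ #↥(X ∩ cardUpd G W) := cardUpd_lemA hv2
  have hEq : (X ∩ cardUpd G W) ∪ (X \ cardUpd G W) = X := Set.inter_union_diff _ _
  -- X ∩ (cardUpd G W) is infinite
  have hω' : ℵ₀ ≤ #↥(X ∩ cardUpd G W) := by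
    by_contra hlt
    push_neg at hlt
    have f1 : (X ∩ cardUpd G W).Finite := Cardinal.lt_aleph0_iff_set_finite.mp hlt
    have f2 : (X \ cardUpd G W).Finite :=
      Cardinal.lt_aleph0_iff_set_finite.mp (hArel.trans_lt hlt)
    exact hXinf (hEq ▸ f1.union f2)
  have hsub : X ∩ cardUpd G W ⊆ (X ∩ (W ∩ cardUpd G W)) ∪ (X \ W) := by
    intro u hu
    by_cases huW : u ∈ W
    · exact Or.inl ⟨hu.1, huW, hu.2⟩
    · exact Or.inr ⟨hu.1, huW⟩
  have hq : #↥(X ∩ (W ∩ cardUpd G W)) < ℵ₀ :=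
    Cardinal.lt_aleph0_iff_set_finite.mpr (hQ.subset Set.inter_subset_right)
  have hbound : #↥(X ∩ cardUpd G W) ≤ #↥(X ∩ (W ∩ cardUpd G W)) + #↥(X \ W) :=
    (Cardinal.mk_le_mk_of_subset hsub).trans (Cardinal.mk_union_le _ _)
  have hν : ℵ₀ ≤ #↥(X \ W) := by
    by_contra hlt
    push_neg at hlt
    exact absurd (hbound.trans_lt (Cardinal.add_lt_aleph0 hq hlt)) (not_lt.mpr hω')
  have hqν : #↥(X ∩ (W ∩ cardUpd G W)) + #↥(X \ W) = #↥(X \ W) :=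
    Cardinal.add_eq_right hν ((le_of_lt hq).trans hν)
  have hXle2 : #↥X ≤ #↥(X ∩ cardUpd G W) := by
    calc #↥X = #↥((X ∩ cardUpd G W) ∪ (X \ cardUpd G W)) := by rw [hEq]
    _ ≤ #↥(X ∩ cardUpd G W) + #↥(X \ cardUpd G W) := Cardinal.mk_union_le _ _
    _ ≤ #↥(X ∩ cardUpd G W) + #↥(X ∩ cardUpd G W) := add_le_add_right hArel _
    _ = #↥(X ∩ cardUpd G W) := Cardinal.add_eq_self hω'
  have hfinal : #↥(X ∩ W) ≤ #↥(X \ W) := by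
    calc #↥(X ∩ W) ≤ #↥X := Cardinal.mk_le_mk_of_subset Set.inter_subset_left
    _ ≤ #↥(X ∩ cardUpd G W) := hXle2
    _ ≤ #↥(X ∩ (W ∩ cardUpd G W)) + #↥(X \ W) := hbound
    _ = #↥(X \ W) := hqν
  exact absurd (hfinal.trans_lt hstrict) (lt_irrefl _)

/-- The all-white configuration is a fixed point. -/
private lemma cardUpd_univ_fixed : cardUpd G (Set.univ : Set V) = Set.univ := by
  ext v
  simp only [Set.mem_univ, iff_true]
  show #↥(G.neighborSet v \ Set.univ) < #↥(G.neighborSet v ∩ Set.univ) ∨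
    (#↥(G.neighborSet v ∩ Set.univ) = #↥(G.neighborSet v \ Set.univ) ∧ v ∈ Set.univ)
  rcases eq_or_ne (#↥(G.neighborSet v)) 0 with h0 | h0
  · right
    constructor
    · simp [Set.inter_univ, Set.diff_univ, h0]
    · trivial
  · left
    simp only [Set.inter_univ, Set.diff_univ, Cardinal.mk_emptyCollection]
    exact zero_lt_iff.mpr h0

end Aux

/-- No infinite graph has a finite dynamic monopoly. -/
theorem no_finite_dynamo_infinite {V : Type*} [Infinite V] (G : SimpleGraph V)
    (W₀ : Set V) (hfin : W₀.Finite) :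
    ∀ r : ℕ, (cardUpd G)^[r] W₀ ≠ Set.univ := by
  -- Key invariant: the set of vertices white at two consecutive rounds is
  -- finite and all its members have finite degree.
  have key : ∀ t : ℕ, ((cardUpd G)^[t] W₀ ∩ (cardUpd G)^[t + 1] W₀).Finite ∧
      (∀ v ∈ (cardUpd G)^[t] W₀ ∩ (cardUpd G)^[t + 1] W₀, (G.neighborSet v).Finite) := by
    intro t
    induction t with
    | zero =>
      simp only [Function.iterate_zero_apply, Function.iterate_one]
      constructor
      · exact hfin.subset Set.inter_subset_left
      · intro v hv
        exact cardUpd_finite_nbhd hfin hv.2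
    | succ t ih =>
      obtain ⟨hQ, hdeg⟩ := ih
      simp only [Function.iterate_succ_apply'] at *
      set W := (cardUpd G)^[t] W₀ with hW
      constructor
      · have hbig : ((W ∩ cardUpd G W) ∪ ⋃ u ∈ W ∩ cardUpd G W, G.neighborSet u).Finite :=
          hQ.union (hQ.biUnion (fun u hu => hdeg u hu))
        refine hbig.subset ?_
        intro x hx
        by_cases hxW : x ∈ W
        · exact Or.inl ⟨hxW, hx.1⟩
        · obtain ⟨u, hadj, huW, huU⟩ := cardUpd_lemC hxW hx.1 hx.2
          exact Or.inr (Set.mem_biUnion ⟨huW, huU⟩ hadj)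
      · intro x hx
        exact cardUpd_lemD hQ hdeg hx.1 hx.2
  intro r hr
  have h := (key r).1
  rw [Function.iterate_succ_apply', hr, cardUpd_univ_fixed, Set.inter_self] at h
  exact Set.infinite_univ h
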